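/- Let A be a real 2×2 matrix with tr A < 0 and det A > 0 (a Hurwitz matrix). Then for every q ∈ ℝ², the solution exp(t·A)·q of the linear system (ẋ, ẏ) = A·(x, y) tends to the origin as t → +∞. -/

import Mathlib

open Matrix Filter
open scoped Nat

noncomputable def myF (d t : ℝ) : ℝ :=
  if 0 ≤ d then Real.cosh (Real.sqrt d * t) else Real.cos (Real.sqrt (-d) * t)

noncomputable def myG (d t : ℝ) : ℝ :=
  if d = 0 then t
  else if 0 ≤ d then Real.sinh (Real.sqrt d * t) / Real.sqrt d
  else Real.sin (Real.sqrt (-d) * t) / Real.sqrt (-d)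

lemma hasSum_myF (d t : ℝ) :
    HasSum (fun k : ℕ => d ^ k * t ^ (2 * k) / (2 * k)!) (myF d t) := by
  unfold myF
  split_ifs with h
  · have h2 : (fun k : ℕ => d ^ k * t ^ (2 * k) / (2 * k)!)
        = fun k : ℕ => (Real.sqrt d * t) ^ (2 * k) / (2 * k)! := by
      funext k
      have e1 : Real.sqrt d ^ (2 * k) = d ^ k := by rw [pow_mul, Real.sq_sqrt h]
      rw [mul_pow, e1]
    rw [h2]; exact Real.hasSum_cosh _
  · push_neg at h
    have h2 : (fun k : ℕ => d ^ k * t ^ (2 * k) / (2 * k)!)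
        = fun k : ℕ => (-1 : ℝ) ^ k * (Real.sqrt (-d) * t) ^ (2 * k) / (2 * k)! := by
      funext k
      have e1 : Real.sqrt (-d) ^ (2 * k) = (-d) ^ k := by
        rw [pow_mul, Real.sq_sqrt (by linarith)]
      rw [mul_pow, e1, ← mul_assoc, ← mul_pow, neg_mul_neg, one_mul]
    rw [h2]; exact Real.hasSum_cos _

lemma hasSum_myG (d t : ℝ) :
    HasSum (fun k : ℕ => d ^ k * t ^ (2 * k + 1) / (2 * k + 1)!) (myG d t) := by
  unfold myG
  split_ifs with h0 h
  · subst h0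
    have h := hasSum_single (f := fun k : ℕ => (0:ℝ) ^ k * t ^ (2 * k + 1) / (2 * k + 1)!) 0
      (fun b hb => by simp [zero_pow hb])
    simpa [Nat.factorial] using h
  · have hs : Real.sqrt d ≠ 0 := by
      simp only [ne_eq, Real.sqrt_eq_zero h]
      exact h0
    have h2 : (fun k : ℕ => d ^ k * t ^ (2 * k + 1) / (2 * k + 1)!)
        = fun k : ℕ => (Real.sqrt d * t) ^ (2 * k + 1) / (2 * k + 1)! / Real.sqrt d := by
      funext k
      have e2 : Real.sqrt d ^ (2 * k + 1) = d ^ k * Real.sqrt d := by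
        rw [pow_succ, pow_mul, Real.sq_sqrt h]
      rw [mul_pow, e2]
      field_simp
    rw [h2]; exact (Real.hasSum_sinh _).div_const _
  · push_neg at h
    have hs : Real.sqrt (-d) ≠ 0 := by
      refine ne_of_gt (Real.sqrt_pos.mpr (by linarith))
    have h2 : (fun k : ℕ => d ^ k * t ^ (2 * k + 1) / (2 * k + 1)!)
        = fun k : ℕ => (-1 : ℝ) ^ k * (Real.sqrt (-d) * t) ^ (2 * k + 1) / (2 * k + 1)!
            / Real.sqrt (-d) := by
      funext k
      have e2 : Real.sqrt (-d) ^ (2 * k + 1) = (-d) ^ k * Real.sqrt (-d) := by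
        rw [pow_succ, pow_mul, Real.sq_sqrt (by linarith)]
      have e3 : ((-1 : ℝ)) ^ k * (-d) ^ k = d ^ k := by
        rw [← mul_pow, neg_mul_neg, one_mul]
      rw [mul_pow, e2, ← mul_assoc, ← mul_assoc, e3]
      field_simp
    rw [h2]
    exact ((Real.hasSum_sin _).div_const _)

set_option maxHeartbeats 1000000 in
lemma exp_smul_of_sq (B : Matrix (Fin 2) (Fin 2) ℝ) (d : ℝ) (hB : B * B = d • 1) (t : ℝ) :
    NormedSpace.exp (t • B) = myF d t • 1 + myG d t • B := by
  rw [NormedSpace.exp_eq_tsum ℝ]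
  refine HasSum.tsum_eq ?_
  have hB2 : B ^ 2 = d • 1 := by rw [pow_two, hB]
  have hsq : (t • B) ^ 2 = (t ^ 2 * d) • 1 := by
    rw [smul_pow, hB2, smul_smul]
  have heven : HasSum (fun k : ℕ => (((2 * k)! : ℝ)⁻¹) • (t • B) ^ (2 * k))
      (myF d t • (1 : Matrix (Fin 2) (Fin 2) ℝ)) := by
    have h := (hasSum_myF d t).smul_const (1 : Matrix (Fin 2) (Fin 2) ℝ)
    have h2 : (fun k : ℕ => (((2 * k)! : ℝ)⁻¹) • (t • B) ^ (2 * k))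
        = fun k : ℕ => (d ^ k * t ^ (2 * k) / (2 * k)!) • (1 : Matrix (Fin 2) (Fin 2) ℝ) := by
      funext k
      rw [pow_mul, hsq, smul_pow, one_pow, smul_smul, mul_pow, ← pow_mul]
      congr 1
      field_simp
    rw [h2]; exact h
  have hodd : HasSum (fun k : ℕ => (((2 * k + 1)! : ℝ)⁻¹) • (t • B) ^ (2 * k + 1))
      (myG d t • B) := by
    have h := (hasSum_myG d t).smul_const B
    have h2 : (fun k : ℕ => (((2 * k + 1)! : ℝ)⁻¹) • (t • B) ^ (2 * k + 1))
        = fun k : ℕ => (d ^ k * t ^ (2 * k + 1) / (2 * k + 1)!) • B := by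
      funext k
      rw [pow_succ, pow_mul, hsq, smul_pow, one_pow, smul_mul_assoc, one_mul, smul_smul,
        smul_smul, mul_pow, ← pow_mul]
      congr 1
      field_simp
      ring
    rw [h2]; exact h
  exact heven.even_add_odd hodd

lemma exp_smul_one (r : ℝ) :
    NormedSpace.exp (r • (1 : Matrix (Fin 2) (Fin 2) ℝ)) = Real.exp r • 1 := by
  rw [Matrix.smul_one_eq_diagonal, Matrix.exp_diagonal, Pi.exp_def]
  rw [Matrix.smul_one_eq_diagonal]
  funext i
  rw [Real.exp_eq_exp_ℝ]

lemma hBB (A : Matrix (Fin 2) (Fin 2) ℝ) :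
    (A - (A.trace / 2) • 1) * (A - (A.trace / 2) • 1)
      = ((A.trace / 2) ^ 2 - A.det) • 1 := by
  ext i j
  fin_cases i <;> fin_cases j <;>
    simp [Matrix.mul_apply, Fin.sum_univ_two, Matrix.trace_fin_two, Matrix.det_fin_two,
      Matrix.one_apply] <;> ring

lemma tendsto_exp_tc {c : ℝ} (hc : c < 0) :
    Tendsto (fun t : ℝ => Real.exp (t * c)) atTop (nhds 0) := by
  apply Real.tendsto_exp_atBot.comp
  exact (tendsto_mul_const_atBot_of_neg hc).mpr tendsto_id

lemma tendsto_exp_mul_myF {c d : ℝ} (hc : c < 0) (hd : d < c ^ 2) :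
    Tendsto (fun t : ℝ => Real.exp (t * c) * myF d t) atTop (nhds 0) := by
  unfold myF
  split_ifs with h
  · set s := Real.sqrt d with hs
    have hs0 : 0 ≤ s := Real.sqrt_nonneg _
    have hslt : s < -c := by
      rw [hs]
      rw [Real.sqrt_lt' (by linarith)]
      nlinarith
    have key : ∀ t : ℝ, Real.exp (t * c) * Real.cosh (s * t)
        = (Real.exp (t * (c + s)) + Real.exp (t * (c - s))) / 2 := by
      intro t
      rw [Real.cosh_eq, show t * (c + s) = t * c + s * t by ring,
        show t * (c - s) = t * c + -(s * t) by ring, Real.exp_add, Real.exp_add]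
      ring
    simp only [key]
    have := ((tendsto_exp_tc (show c + s < 0 by linarith)).add
      (tendsto_exp_tc (show c - s < 0 by linarith))).div_const 2
    simpa using this
  · apply squeeze_zero_norm (a := fun t => Real.exp (t * c)) _ (tendsto_exp_tc hc)
    intro t
    rw [norm_mul, Real.norm_eq_abs, Real.norm_eq_abs, Real.abs_exp]
    calc Real.exp (t * c) * |Real.cos (Real.sqrt (-d) * t)|
        ≤ Real.exp (t * c) * 1 := by
          gcongr; exact Real.abs_cos_le_one _
      _ = Real.exp (t * c) := mul_one _

lemma tendsto_exp_mul_myG {c d : ℝ} (hc : c < 0) (hd : d < c ^ 2) :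
    Tendsto (fun t : ℝ => Real.exp (t * c) * myG d t) atTop (nhds 0) := by
  unfold myG
  split_ifs with h0 h
  · have hcomp : Tendsto (fun t : ℝ => (-c * t) ^ 1 * Real.exp (-(-c * t))) atTop (nhds 0) :=
      (Real.tendsto_pow_mul_exp_neg_atTop_nhds_zero 1).comp
        (Tendsto.const_mul_atTop (by linarith : (0:ℝ) < -c) tendsto_id)
    have := hcomp.const_mul (-1 / c)
    rw [mul_zero] at this
    refine this.congr fun t => ?_
    have hcne : c ≠ 0 := ne_of_lt hc
    rw [show -(-c * t) = t * c by ring, pow_one]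
    field_simp
  · set s := Real.sqrt d with hs
    have hd0 : 0 < d := lt_of_le_of_ne h (Ne.symm h0)
    have hs0 : 0 < s := Real.sqrt_pos.mpr hd0
    have hslt : s < -c := by
      rw [hs, Real.sqrt_lt' (by linarith)]
      nlinarith
    have key : ∀ t : ℝ, Real.exp (t * c) * (Real.sinh (s * t) / s)
        = (Real.exp (t * (c + s)) - Real.exp (t * (c - s))) / (2 * s) := by
      intro t
      rw [Real.sinh_eq, show t * (c + s) = t * c + s * t by ring,
        show t * (c - s) = t * c + -(s * t) by ring, Real.exp_add, Real.exp_add]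
      field_simp
    simp only [key]
    have := ((tendsto_exp_tc (show c + s < 0 by linarith)).sub
      (tendsto_exp_tc (show c - s < 0 by linarith))).div_const (2 * s)
    simpa using this
  · push_neg at h
    set s := Real.sqrt (-d) with hs
    have hs0 : 0 < s := Real.sqrt_pos.mpr (by linarith)
    have hlim : Tendsto (fun t : ℝ => Real.exp (t * c) / s) atTop (nhds 0) := by
      simpa using (tendsto_exp_tc hc).div_const s
    apply squeeze_zero_norm (a := fun t => Real.exp (t * c) / s) _ hlim
    intro t
    simp only [norm_mul, Real.norm_eq_abs, Real.abs_exp, abs_div, abs_of_pos hs0]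
    rw [div_eq_mul_inv, div_eq_mul_inv]
    gcongr
    calc |Real.sin (s * t)| * s⁻¹ ≤ 1 * s⁻¹ := by
          gcongr
          exact Real.abs_sin_le_one _
      _ = s⁻¹ := one_mul _

theorem stmt_4 (A : Matrix (Fin 2) (Fin 2) ℝ) (hTr : A.trace < 0) (hDet : 0 < A.det) :
    ∀ q : Fin 2 → ℝ,
      Filter.Tendsto (fun t : ℝ => (NormedSpace.exp (t • A)).mulVec q) Filter.atTop
        (nhds 0) := by
  intro q
  set c := A.trace / 2 with hc
  set B := A - c • (1 : Matrix (Fin 2) (Fin 2) ℝ) with hBdef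
  set d := c ^ 2 - A.det with hd
  have hc0 : c < 0 := by rw [hc]; linarith
  have hdlt : d < c ^ 2 := by rw [hd]; linarith
  have hB : B * B = d • 1 := by rw [hBdef, hd, hc]; exact hBB A
  have hsplit : ∀ t : ℝ, NormedSpace.exp (t • A)
      = Real.exp (t * c) • (myF d t • 1 + myG d t • B) := by
    intro t
    have h1 : t • A = (t * c) • (1 : Matrix (Fin 2) (Fin 2) ℝ) + t • B := by
      rw [hBdef, smul_sub, mul_smul]
      abel
    rw [h1, Matrix.exp_add_of_commute _ _ ((Commute.one_left (t • B)).smul_left (t * c)),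
      exp_smul_one, exp_smul_of_sq B d hB t, smul_mul_assoc, one_mul]
  have hmul : ∀ t : ℝ, (NormedSpace.exp (t • A)).mulVec q
      = (Real.exp (t * c) * myF d t) • q + (Real.exp (t * c) * myG d t) • B.mulVec q := by
    intro t
    rw [hsplit t, Matrix.smul_mulVec, Matrix.add_mulVec, Matrix.smul_mulVec,
      Matrix.smul_mulVec, Matrix.one_mulVec, smul_add, smul_smul, smul_smul]
  simp only [hmul]
  have l1 := tendsto_exp_mul_myF hc0 hdlt
  have l2 := tendsto_exp_mul_myG hc0 hdlt
  have := (l1.smul_const q).add (l2.smul_const (B.mulVec q))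
  simpa using this
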